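/- Let (V, ω) be a finite-dimensional real symplectic vector space, L ⊆ V ⊗ ℂ a positive complex Lagrangian, and C ⊆ V coisotropic with reduction π₀ : C → V₀ = C/C^ω. Then the reduced Lagrangian L₀ = π₀(L ∩ C_ℂ) is a positive Lagrangian in V₀ ⊗ ℂ with respect to the reduced symplectic form. -/

import Mathlib

open scoped TensorProduct

/-- The symplectic complement of a subspace with respect to a bilinear form. -/
def SympComp {R M : Type*} [CommRing R] [AddCommGroup M] [Module R M]
    (B : M →ₗ[R] M →ₗ[R] R) (C : Submodule R M) : Submodule R M where
  carrier := {v | ∀ c ∈ C, B v c = 0}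
  add_mem' := by
    intro a b ha hb c hc
    simp [map_add, LinearMap.add_apply, ha c hc, hb c hc]
  zero_mem' := by
    intro c hc
    simp
  smul_mem' := by
    intro r a ha c hc
    simp [map_smul, LinearMap.smul_apply, ha c hc]

/-- A subspace is Lagrangian if it coincides with its symplectic complement. -/
def IsLagrangian {R M : Type*} [CommRing R] [AddCommGroup M] [Module R M]
    (B : M →ₗ[R] M →ₗ[R] R) (L : Submodule R M) : Prop :=
  SympComp B L = L

/-- Complex conjugation on the complexification `ℂ ⊗[ℝ] V` of a real vector space. -/
noncomputable def conjTensor (V : Type*) [AddCommGroup V] [Module ℝ V] :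
    (ℂ ⊗[ℝ] V) →ₗ[ℝ] (ℂ ⊗[ℝ] V) :=
  TensorProduct.map Complex.conjAe.toLinearMap LinearMap.id

section Helpers

open Complex TensorProduct

noncomputable def rePart (M : Type*) [AddCommGroup M] [Module ℝ M] : (ℂ ⊗[ℝ] M) →ₗ[ℝ] M :=
  (TensorProduct.lid ℝ M).toLinearMap ∘ₗ TensorProduct.map Complex.reLm LinearMap.id

noncomputable def imPart (M : Type*) [AddCommGroup M] [Module ℝ M] : (ℂ ⊗[ℝ] M) →ₗ[ℝ] M :=
  (TensorProduct.lid ℝ M).toLinearMap ∘ₗ TensorProduct.map Complex.imLm LinearMap.id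

variable {M : Type*} [AddCommGroup M] [Module ℝ M]

@[simp] lemma rePart_tmul (z : ℂ) (m : M) : rePart M (z ⊗ₜ m) = z.re • m := by
  simp [rePart]

@[simp] lemma imPart_tmul (z : ℂ) (m : M) : imPart M (z ⊗ₜ m) = z.im • m := by
  simp [imPart]

lemma tensor_repr (u : ℂ ⊗[ℝ] M) : ∃ x y : M, u = 1 ⊗ₜ x + I ⊗ₜ y := by
  induction u using TensorProduct.induction_on with
  | zero => exact ⟨0, 0, by simp⟩
  | tmul z m =>
    refine ⟨z.re • m, z.im • m, ?_⟩
    rw [tmul_smul, tmul_smul, smul_tmul', smul_tmul', ← add_tmul]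
    congr 1
    simp [Complex.real_smul]
  | add a b ha hb =>
    obtain ⟨x1, y1, rfl⟩ := ha
    obtain ⟨x2, y2, rfl⟩ := hb
    exact ⟨x1 + x2, y1 + y2, by rw [tmul_add, tmul_add]; abel⟩

lemma tensor_eq_zero {x y : M} (h : (1:ℂ) ⊗ₜ[ℝ] x + I ⊗ₜ[ℝ] y = 0) : x = 0 ∧ y = 0 := by
  have hre := congrArg (rePart M) h
  have him := congrArg (imPart M) h
  simp at hre him
  exact ⟨hre, him⟩

lemma mem_sympComp {R M : Type*} [CommRing R] [AddCommGroup M] [Module R M]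
    {B : M →ₗ[R] M →ₗ[R] R} {N : Submodule R M} {v : M} :
    v ∈ SympComp B N ↔ ∀ c ∈ N, B v c = 0 := Iff.rfl

lemma sympComp_eq_orthogonal {K V : Type*} [Field K] [AddCommGroup V] [Module K V]
    {B : LinearMap.BilinForm K V} (hrefl : B.IsRefl) (N : Submodule K V) :
    SympComp B N = B.orthogonal N := by
  ext v
  rw [mem_sympComp, LinearMap.BilinForm.mem_orthogonal_iff]
  exact ⟨fun h n hn => hrefl _ _ (h n hn), fun h n hn => hrefl _ _ (h n hn)⟩

lemma sympComp_sympComp {K V : Type*} [Field K] [AddCommGroup V] [Module K V]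
    [FiniteDimensional K V] {B : LinearMap.BilinForm K V}
    (hnd : B.Nondegenerate) (hrefl : B.IsRefl) (N : Submodule K V) :
    SympComp B (SympComp B N) = N := by
  rw [sympComp_eq_orthogonal hrefl, sympComp_eq_orthogonal hrefl,
    LinearMap.BilinForm.orthogonal_orthogonal hnd hrefl]

lemma sympComp_sup {R M : Type*} [CommRing R] [AddCommGroup M] [Module R M]
    (B : M →ₗ[R] M →ₗ[R] R) (N₁ N₂ : Submodule R M) :
    SympComp B (N₁ ⊔ N₂) = SympComp B N₁ ⊓ SympComp B N₂ := by
  ext v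
  simp only [Submodule.mem_inf, mem_sympComp]
  constructor
  · intro h
    exact ⟨fun c hc => h c (Submodule.mem_sup_left hc),
      fun c hc => h c (Submodule.mem_sup_right hc)⟩
  · rintro ⟨h1, h2⟩ c hc
    rcases Submodule.mem_sup.mp hc with ⟨a, ha, b, hb, rfl⟩
    simp [map_add, h1 a ha, h2 b hb]

@[simp] lemma conjTensor_tmul (z : ℂ) (m : M) :
    conjTensor M (z ⊗ₜ m) = (starRingEnd ℂ z) ⊗ₜ m := by
  simp [conjTensor]

lemma conjTensor_baseChange {N : Type*} [AddCommGroup N] [Module ℝ N]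
    (f : M →ₗ[ℝ] N) (u : ℂ ⊗[ℝ] M) :
    conjTensor N (f.baseChange ℂ u) = f.baseChange ℂ (conjTensor M u) := by
  induction u using TensorProduct.induction_on with
  | zero => simp
  | tmul z m => simp [LinearMap.baseChange_tmul]
  | add a b ha hb => simp [map_add, ha, hb]

end Helpers

open Complex TensorProduct

set_option maxHeartbeats 1000000 in
lemma positive_lagrangian_reduction_aux
    {V : Type*} [AddCommGroup V] [Module ℝ V] [FiniteDimensional ℝ V]
    (ω : LinearMap.BilinForm ℝ V) (halt : ∀ v, ω v v = 0)
    (hnd : LinearMap.BilinForm.Nondegenerate ω)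
    (C : Submodule ℝ V) (hcoiso : SympComp ω C ≤ C)
    (L : Submodule ℂ (ℂ ⊗[ℝ] V))
    (hL : IsLagrangian (LinearMap.BilinForm.baseChange ℂ ω) L)
    (hpos : ∀ v ∈ L, v ≠ 0 →
      0 < (Complex.I * LinearMap.BilinForm.baseChange ℂ ω v (conjTensor V v)).re ∧
        (Complex.I * LinearMap.BilinForm.baseChange ℂ ω v (conjTensor V v)).im = 0)
    (K : Submodule ℝ C) (hK : K = Submodule.comap C.subtype (SympComp ω C))
    (ω₀ : LinearMap.BilinForm ℝ (C ⧸ K))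
    (hω₀ : ∀ c c' : C, ω₀ (K.mkQ c) (K.mkQ c') = ω (c : V) (c' : V)) :
    IsLagrangian (LinearMap.BilinForm.baseChange ℂ ω₀)
        (Submodule.map (LinearMap.baseChange ℂ K.mkQ)
          (Submodule.comap (LinearMap.baseChange ℂ C.subtype) L)) ∧
      ∀ v ∈ Submodule.map (LinearMap.baseChange ℂ K.mkQ)
          (Submodule.comap (LinearMap.baseChange ℂ C.subtype) L), v ≠ 0 →
        0 < (Complex.I * LinearMap.BilinForm.baseChange ℂ ω₀ v
              (conjTensor (C ⧸ K) v)).re ∧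
          (Complex.I * LinearMap.BilinForm.baseChange ℂ ω₀ v
              (conjTensor (C ⧸ K) v)).im = 0 := by
  set ιc : ℂ ⊗[ℝ] C →ₗ[ℂ] ℂ ⊗[ℝ] V := LinearMap.baseChange ℂ C.subtype with hιc
  set πc : ℂ ⊗[ℝ] C →ₗ[ℂ] ℂ ⊗[ℝ] (C ⧸ K) := LinearMap.baseChange ℂ K.mkQ with hπc
  set Ω : LinearMap.BilinForm ℂ (ℂ ⊗[ℝ] V) := LinearMap.BilinForm.baseChange ℂ ω with hΩ
  set Ω₀ : LinearMap.BilinForm ℂ (ℂ ⊗[ℝ] (C ⧸ K)) := LinearMap.BilinForm.baseChange ℂ ω₀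
    with hΩ₀
  set Lc : Submodule ℂ (ℂ ⊗[ℝ] C) := Submodule.comap ιc L with hLc
  set L₀ : Submodule ℂ (ℂ ⊗[ℝ] (C ⧸ K)) := Submodule.map πc Lc with hL₀
  -- skew-symmetry of ω
  have hskew : ∀ x y, ω x y = - ω y x := by
    intro x y
    have h := halt (x + y)
    simp only [map_add, LinearMap.add_apply, halt x, halt y] at h
    linarith
  -- skew-symmetry and reflexivity of Ω
  have hΩskew : ∀ a b, Ω a b = - Ω b a := by
    intro a b
    induction a using TensorProduct.induction_on with
    | zero => simp
    | tmul z x =>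
      induction b using TensorProduct.induction_on with
      | zero => simp
      | tmul w y =>
        rw [hΩ, LinearMap.BilinForm.baseChange_tmul, LinearMap.BilinForm.baseChange_tmul,
          hskew x y]
        simp [mul_comm]
      | add b1 b2 h1 h2 => simp only [map_add, LinearMap.add_apply, h1, h2]; abel
    | add a1 a2 h1 h2 =>
      simp only [map_add, LinearMap.add_apply, h1, h2]; abel
  have hΩrefl : Ω.IsRefl := by
    intro a b h
    rw [hΩskew b a, h, neg_zero]
  -- nondegeneracy of Ω
  have hΩnd : Ω.Nondegenerate := by
    refine (LinearMap.IsRefl.nondegenerate_iff_separatingLeft hΩrefl).mpr ?_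
    intro v hv
    obtain ⟨x, y, rfl⟩ := tensor_repr v
    have key : ∀ c : V, ω x c = 0 ∧ ω y c = 0 := by
      intro c
      have h := hv ((1:ℂ) ⊗ₜ c)
      rw [hΩ] at h
      simp only [map_add, LinearMap.add_apply, LinearMap.BilinForm.baseChange_tmul,
        Complex.real_smul] at h
      rw [Complex.ext_iff] at h
      simpa using h
    have hx : x = 0 := hnd.1 x fun c => (key c).1
    have hy : y = 0 := hnd.1 y fun c => (key c).2
    rw [hx, hy, tmul_zero, tmul_zero, add_zero]
  -- compatibility of the reduced form with the reduction map
  have hcompat : ∀ a b : ℂ ⊗[ℝ] C, Ω₀ (πc a) (πc b) = Ω (ιc a) (ιc b) := by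
    intro a b
    induction a using TensorProduct.induction_on with
    | zero => simp
    | tmul z c =>
      induction b using TensorProduct.induction_on with
      | zero => simp
      | tmul w c' =>
        rw [hπc, hιc, hΩ, hΩ₀]
        simp only [LinearMap.baseChange_tmul, LinearMap.BilinForm.baseChange_tmul,
          Submodule.coe_subtype]
        rw [hω₀ c c']
      | add b1 b2 h1 h2 => simp only [map_add, h1, h2]
    | add a1 a2 h1 h2 =>
      simp only [map_add, LinearMap.add_apply, h1, h2]
  -- surjectivity of πc
  have hπsurj : ∀ α : ℂ ⊗[ℝ] (C ⧸ K), ∃ a : ℂ ⊗[ℝ] C, πc a = α := by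
    intro α
    induction α using TensorProduct.induction_on with
    | zero => exact ⟨0, map_zero _⟩
    | tmul z q =>
      obtain ⟨c, rfl⟩ := Submodule.mkQ_surjective K q
      exact ⟨z ⊗ₜ c, by rw [hπc]; simp [LinearMap.baseChange_tmul]⟩
    | add a b ha hb =>
      obtain ⟨a', rfl⟩ := ha
      obtain ⟨b', rfl⟩ := hb
      exact ⟨a' + b', map_add _ _ _⟩
  set Cc : Submodule ℂ (ℂ ⊗[ℝ] V) := LinearMap.range ιc with hCc
  have hCc_mem : ∀ c : C, (1:ℂ) ⊗ₜ (c : V) ∈ Cc := by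
    intro c
    exact ⟨(1:ℂ) ⊗ₜ c, by rw [hιc]; simp [LinearMap.baseChange_tmul]⟩
  -- description of the symplectic complement of Cc
  have hKc : ∀ k ∈ SympComp Ω Cc, ∃ x y : V, x ∈ SympComp ω C ∧ y ∈ SympComp ω C ∧
      k = (1:ℂ) ⊗ₜ x + Complex.I ⊗ₜ y := by
    intro k hk
    obtain ⟨x, y, rfl⟩ := tensor_repr k
    have key : ∀ c ∈ C, ω x c = 0 ∧ ω y c = 0 := by
      intro c hc
      have h := hk ((1:ℂ) ⊗ₜ c) (hCc_mem ⟨c, hc⟩)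
      rw [hΩ] at h
      simp only [map_add, LinearMap.add_apply, LinearMap.BilinForm.baseChange_tmul,
        Complex.real_smul] at h
      rw [Complex.ext_iff] at h
      simpa using h
    exact ⟨x, y, fun c hc => (key c hc).1, fun c hc => (key c hc).2, rfl⟩
  -- the key orthogonal-complement identity
  have heq : SympComp Ω (L ⊓ Cc) = L ⊔ SympComp Ω Cc := by
    have h1 : L ⊓ Cc = SympComp Ω (L ⊔ SympComp Ω Cc) := by
      rw [sympComp_sup, hL, sympComp_sympComp hΩnd hΩrefl]
    rw [h1, sympComp_sympComp hΩnd hΩrefl]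
  have hmapcomap : Submodule.map ιc Lc = Cc ⊓ L := Submodule.map_comap_eq ιc L
  constructor
  · -- L₀ is Lagrangian
    apply le_antisymm
    · -- hard direction
      intro α hα
      obtain ⟨a, rfl⟩ := hπsurj α
      have ha : ιc a ∈ SympComp Ω (L ⊓ Cc) := by
        intro w hw
        have hw' : w ∈ Submodule.map ιc Lc := by
          rw [hmapcomap]
          exact ⟨hw.2, hw.1⟩
        obtain ⟨u, hu, rfl⟩ := hw'
        rw [← hcompat]
        exact hα (πc u) ⟨u, hu, rfl⟩
      rw [heq] at ha
      obtain ⟨l, hl, k, hk, hlk⟩ := Submodule.mem_sup.mp ha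
      obtain ⟨x, y, hx, hy, rfl⟩ := hKc k hk
      set k' : ℂ ⊗[ℝ] C := (1:ℂ) ⊗ₜ (⟨x, hcoiso hx⟩ : C) + Complex.I ⊗ₜ (⟨y, hcoiso hy⟩ : C)
        with hk'def
      have hιk' : ιc k' = (1:ℂ) ⊗ₜ x + Complex.I ⊗ₜ y := by
        rw [hk'def, hιc]
        simp [LinearMap.baseChange_tmul]
      have hπk' : πc k' = 0 := by
        have hx0 : K.mkQ (⟨x, hcoiso hx⟩ : C) = 0 := by
          rw [Submodule.mkQ_apply, Submodule.Quotient.mk_eq_zero, hK]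
          exact Submodule.mem_comap.mpr hx
        have hy0 : K.mkQ (⟨y, hcoiso hy⟩ : C) = 0 := by
          rw [Submodule.mkQ_apply, Submodule.Quotient.mk_eq_zero, hK]
          exact Submodule.mem_comap.mpr hy
        rw [hk'def, hπc]
        simp [LinearMap.baseChange_tmul, hx0, hy0]
      have hmem : a - k' ∈ Lc := by
        have hsub : ιc (a - k') = l := by
          rw [map_sub, hιk', ← hlk]
          abel
        show ιc (a - k') ∈ L
        rw [hsub]
        exact hl
      exact ⟨a - k', hmem, by rw [map_sub, hπk', sub_zero]⟩
    · -- easy direction : L₀ is isotropic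
      rintro v ⟨u, hu, rfl⟩
      rintro w ⟨u', hu', rfl⟩
      rw [hcompat]
      have hu2 : ιc u ∈ SympComp Ω L := by rw [hL]; exact hu
      exact hu2 (ιc u') hu'
  · -- positivity
    rintro v ⟨u, hu, rfl⟩ hne
    have hu0 : ιc u ≠ 0 := by
      intro h0
      obtain ⟨x, y, rfl⟩ := tensor_repr u
      have h0' : (1:ℂ) ⊗ₜ[ℝ] (x : V) + Complex.I ⊗ₜ[ℝ] (y : V) = 0 := by
        rw [← h0, hιc]
        simp [LinearMap.baseChange_tmul]
      obtain ⟨hx0, hy0⟩ := tensor_eq_zero h0'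
      apply hne
      have hx : x = 0 := Subtype.ext hx0
      have hy : y = 0 := Subtype.ext hy0
      rw [hx, hy]
      simp
    have key : Ω₀ (πc u) (conjTensor (C ⧸ K) (πc u)) =
        Ω (ιc u) (conjTensor V (ιc u)) := by
      rw [hπc, conjTensor_baseChange K.mkQ u, ← hπc, hcompat, hιc,
        ← conjTensor_baseChange C.subtype u, ← hιc]
    rw [key]
    exact hpos (ιc u) hu hu0

/-- **Reduction of positive Lagrangians.**  Let `(V, ω)` be a finite-dimensional real
symplectic vector space, `L ⊆ V ⊗ ℂ` a positive complex Lagrangian and `C ⊆ V` coisotropic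
with reduction `π₀ : C → V₀ = C/C^ω`.  Then the reduced Lagrangian `L₀ = π₀(L ∩ C_ℂ)` is a
positive Lagrangian in `V₀ ⊗ ℂ` with respect to the reduced symplectic form. -/
theorem positive_lagrangian_reduction
    {V : Type*} [AddCommGroup V] [Module ℝ V] [FiniteDimensional ℝ V]
    (ω : LinearMap.BilinForm ℝ V) (halt : ∀ v, ω v v = 0)
    (hnd : LinearMap.BilinForm.Nondegenerate ω)
    (C : Submodule ℝ V) (hcoiso : SympComp ω C ≤ C)
    (L : Submodule ℂ (ℂ ⊗[ℝ] V))
    (hL : IsLagrangian (LinearMap.BilinForm.baseChange ℂ ω) L)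
    (hpos : ∀ v ∈ L, v ≠ 0 →
      0 < (Complex.I * LinearMap.BilinForm.baseChange ℂ ω v (conjTensor V v)).re ∧
        (Complex.I * LinearMap.BilinForm.baseChange ℂ ω v (conjTensor V v)).im = 0)
    (ω₀ : LinearMap.BilinForm ℝ (C ⧸ Submodule.comap C.subtype (SympComp ω C)))
    (hω₀ : ∀ c c' : C,
      ω₀ ((Submodule.comap C.subtype (SympComp ω C)).mkQ c)
          ((Submodule.comap C.subtype (SympComp ω C)).mkQ c') = ω (c : V) (c' : V)) :
    IsLagrangian (LinearMap.BilinForm.baseChange ℂ ω₀)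
        (Submodule.map
          (LinearMap.baseChange ℂ (Submodule.comap C.subtype (SympComp ω C)).mkQ)
          (Submodule.comap (LinearMap.baseChange ℂ C.subtype) L)) ∧
      ∀ v ∈ Submodule.map
          (LinearMap.baseChange ℂ (Submodule.comap C.subtype (SympComp ω C)).mkQ)
          (Submodule.comap (LinearMap.baseChange ℂ C.subtype) L), v ≠ 0 →
        0 < (Complex.I * LinearMap.BilinForm.baseChange ℂ ω₀ v
              (conjTensor (C ⧸ Submodule.comap C.subtype (SympComp ω C)) v)).re ∧
          (Complex.I * LinearMap.BilinForm.baseChange ℂ ω₀ v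
              (conjTensor (C ⧸ Submodule.comap C.subtype (SympComp ω C)) v)).im = 0 :=
  positive_lagrangian_reduction_aux ω halt hnd C hcoiso L hL hpos _ rfl ω₀ hω₀
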